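/- Let G be a finite nonabelian group such that M(G,2) admits a nontrivial half-automorphism. Then there exists y ∈ G of order 4 such that whenever y = gh with g,h ∈ G, either g has order 4 or h has order 4. -/

import Mathlib

/-- The Chein loop multiplication on `M(G,2) = G × Bool`,
where `(g, false)` represents `g` and `(g, true)` represents `gu`. -/
def cmul {G : Type*} [Group G] : G × Bool → G × Bool → G × Bool
  | (g, false), (h, false) => (g * h, false)
  | (g, false), (h, true)  => (h * g, true)
  | (g, true),  (h, false) => (g * h⁻¹, true)
  | (g, true),  (h, true)  => (h⁻¹ * g, false)

/-- A half-automorphism of the Chein loop `M(G,2)`. -/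
def IsHalfAut {G : Type*} [Group G] (f : G × Bool → G × Bool) : Prop :=
  Function.Bijective f ∧
    ∀ x y, f (cmul x y) = cmul (f x) (f y) ∨ f (cmul x y) = cmul (f y) (f x)


namespace Chein

section Scott

variable {A B : Type*} [Group A] [Group B] {φ : A → B}

lemma sc_one (hh : ∀ x y : A, φ (x*y) = φ x * φ y ∨ φ (x*y) = φ y * φ x) :
    φ 1 = 1 := by
  have h : φ (1*1 : A) = φ 1 * φ 1 := (hh 1 1).elim id id
  rw [one_mul] at h
  have h2 : φ 1 * (1:B) = φ 1 * φ 1 := by rw [mul_one]; exact h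
  exact (mul_left_cancel h2).symm

lemma sc_inv (hh : ∀ x y : A, φ (x*y) = φ x * φ y ∨ φ (x*y) = φ y * φ x) (x : A) :
    φ x⁻¹ = (φ x)⁻¹ := by
  have h := hh x x⁻¹
  rw [mul_inv_cancel, sc_one hh] at h
  rcases h with h | h
  · exact eq_inv_of_mul_eq_one_right h.symm
  · exact eq_inv_of_mul_eq_one_left h.symm

lemma sc_sq (hh : ∀ x y : A, φ (x*y) = φ x * φ y ∨ φ (x*y) = φ y * φ x) (x : A) :
    φ (x*x) = φ x * φ x := (hh x x).elim id id

/-- no anomalies (core): commuting elements with straight value force commuting images. -/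
lemma sc_core (hh : ∀ x y : A, φ (x*y) = φ x * φ y ∨ φ (x*y) = φ y * φ x)
    (a b : A) (hc : a*b = b*a) (hv : φ (a*b) = φ a * φ b)
    (hne : φ a * φ b ≠ φ b * φ a) : False := by
  set X := φ a with hX
  set Y := φ b with hY
  have hW : φ (a⁻¹*b) = X⁻¹*Y := by
    rcases hh a⁻¹ b with h1 | h1
    · rw [sc_inv hh] at h1; exact h1
    · exfalso
      rw [sc_inv hh] at h1
      have he : (a*a)*(a⁻¹*b) = a*b := by group
      have h2 := hh (a*a) (a⁻¹*b)
      rw [he, hv, sc_sq hh, h1] at h2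
      rcases h2 with h3 | h3
      · apply hne
        have h4 := congrArg (fun z => X⁻¹ * z * X) h3
        simpa [mul_assoc, hX, hY] using h4.symm
      · apply hne
        simpa [mul_assoc] using h3
  have hU : φ (b⁻¹*a⁻¹) = Y⁻¹*X⁻¹ := by
    have he : b⁻¹*a⁻¹ = (a*b)⁻¹ := by group
    rw [he, sc_inv hh, hv, mul_inv_rev]
  have he2 : (b*b)*(b⁻¹*a⁻¹) = a⁻¹*b := by
    have hba : b*a⁻¹ = a⁻¹*b := by
      have : a * (b * a⁻¹) = a * (a⁻¹ * b) := by
        rw [← mul_assoc, hc]; group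
      exact mul_left_cancel this
    calc (b*b)*(b⁻¹*a⁻¹) = b*a⁻¹ := by group
    _ = a⁻¹*b := hba
  have h2 := hh (b*b) (b⁻¹*a⁻¹)
  rw [he2, hW, sc_sq hh, hU] at h2
  rcases h2 with h3 | h3
  · apply hne
    have h3' : X⁻¹*Y = Y*X⁻¹ := by simpa [mul_assoc, hX, hY] using h3
    have h4 := congrArg (fun z => X * z * X) h3'
    simpa [mul_assoc] using h4.symm
  · apply hne
    have h4 : Y * X⁻¹ = X⁻¹ * Y := by
      have h5 := congrArg (fun z => Y * z) h3
      simp [← mul_assoc, hX, hY] at h5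
      exact h5
    have h6 := congrArg (fun z => X * z * X) h4
    simpa [mul_assoc] using h6

lemma sc_noAnom (hh : ∀ x y : A, φ (x*y) = φ x * φ y ∨ φ (x*y) = φ y * φ x)
    (a b : A) (hc : a*b = b*a) : φ a * φ b = φ b * φ a := by
  by_contra hne
  rcases hh a b with hv | hv
  · exact sc_core hh a b hc hv hne
  · rw [hc] at hv
    exact sc_core hh b a hc.symm hv (fun h => hne h.symm)

end Scott
end Chein

namespace Chein
section Scott2
variable {A B : Type*} [Group A] [Group B] {φ : A → B}

/-- a mixed base is impossible -/
lemma sc_mixed (hinj : Function.Injective φ)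
    (hh : ∀ x y : A, φ (x*y) = φ x * φ y ∨ φ (x*y) = φ y * φ x)
    (a b c : A)
    (hab : φ (a*b) = φ a * φ b) (hab' : φ a * φ b ≠ φ b * φ a)
    (hac : φ (a*c) = φ c * φ a) (hac' : φ c * φ a ≠ φ a * φ c) : False := by
  set X := φ a with hX
  set Y := φ b with hY
  set Z := φ c with hZ
  have hPQ : Z*(X*Y) = (X*Y)*Z ∨ Y*(Z*X) = (Z*X)*Y := by
    have he : (a*b)*(b⁻¹*c) = a*c := by group
    have h2 := hh (a*b) (b⁻¹*c)
    rw [he, hac, hab] at h2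
    rcases hh b⁻¹ c with h1 | h1 <;> rw [sc_inv hh, ← hY, ← hZ] at h1 <;> rw [h1] at h2
    · rcases h2 with h3 | h3
      · exfalso; apply hac'
        rw [h3]; simp [mul_assoc]
      · right
        calc Y*(Z*X) = Y*(Y⁻¹*Z*(X*Y)) := by rw [h3]
        _ = Z*(X*Y) := by simp [← mul_assoc]
        _ = Z*X*Y := by rw [mul_assoc]
    · rcases h2 with h3 | h3
      · left
        calc Z*(X*Y) = Z*X*Y := by rw [mul_assoc]
        _ = X*Y*(Z*Y⁻¹)*Y := by rw [h3]
        _ = X*Y*Z := by simp [mul_assoc]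
      · exfalso; apply hab'
        have h4 : Z*X = Z*(Y⁻¹*(X*Y)) := by rw [h3, mul_assoc]
        have h5 := mul_left_cancel h4
        have h6 : Y*X = X*Y := by
          calc Y*X = Y*(Y⁻¹*(X*Y)) := by rw [← h5]
          _ = X*Y := by simp [← mul_assoc]
        exact h6.symm
  have hacne : a*c ≠ c*a := fun hcomm => hac' (sc_noAnom hh c a hcomm.symm)
  have hca : φ (c*a) = X*Z := by
    rcases hh c a with h | h
    · exfalso; exact hacne (hinj (by rw [hac, h, ← hX, ← hZ]))
    · rw [h, ← hX, ← hZ]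
  have habne : a*b ≠ b*a := fun hcomm => hab' (sc_noAnom hh a b hcomm)
  have hba : φ (b*a) = Y*X := by
    rcases hh b a with h | h
    · rw [h, ← hX, ← hY]
    · exfalso; exact habne (hinj (by rw [hab, h, ← hX, ← hY]))
  rcases hPQ with hP | hQ
  · -- P1 : Z*(X*Y) = X*Y*Z
    by_cases hBC : Y*Z = Z*Y
    · apply hac'
      have h4 : (Z*X)*Y = (X*Z)*Y := by
        calc (Z*X)*Y = Z*(X*Y) := by rw [mul_assoc]
        _ = X*Y*Z := hP
        _ = X*(Y*Z) := by rw [mul_assoc]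
        _ = X*(Z*Y) := by rw [hBC]
        _ = (X*Z)*Y := by rw [mul_assoc]
      exact mul_right_cancel h4
    · have e1 := hh b (a*c)
      rw [hac, ← hY] at e1
      have e2 := hh (b*a) c
      rw [hba, ← hZ] at e2
      have hel : b*(a*c) = (b*a)*c := by group
      rw [hel] at e1
      have heta : Z*(X*Y) = Y*(X*Z) := by
        rcases e1 with h1 | h1 <;> rcases e2 with h2 | h2
        · exfalso; apply hac'
          have h3 := h1.symm.trans h2
          have h4 : Y*(Z*X) = Y*(X*Z) := by rw [h3, mul_assoc]
          exact mul_left_cancel h4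
        · exfalso; apply hBC
          have h3 := h1.symm.trans h2
          simp only [← mul_assoc] at h3
          exact mul_right_cancel h3
        · have h3 := h1.symm.trans h2
          simp only [mul_assoc] at h3
          exact h3
        · exfalso; apply hab'
          have h3 := h1.symm.trans h2
          simp only [mul_assoc] at h3
          exact mul_left_cancel h3
      apply hab'
      have h4 : (X*Y)*Z = (Y*X)*Z := by
        calc (X*Y)*Z = Z*(X*Y) := hP.symm
        _ = Y*(X*Z) := heta
        _ = (Y*X)*Z := by rw [mul_assoc]
      exact mul_right_cancel h4
  · -- Q1 : Y*(Z*X) = Z*X*Y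
    by_cases hBC : Y*Z = Z*Y
    · apply hab'
      have h4 : Z*(Y*X) = Z*(X*Y) := by
        calc Z*(Y*X) = (Z*Y)*X := by rw [mul_assoc]
        _ = (Y*Z)*X := by rw [hBC]
        _ = Y*(Z*X) := by rw [mul_assoc]
        _ = (Z*X)*Y := hQ
        _ = Z*(X*Y) := by rw [mul_assoc]
      exact (mul_left_cancel h4).symm
    · have e1 := hh c (a*b)
      rw [hab, ← hZ] at e1
      have e2 := hh (c*a) b
      rw [hca, ← hY] at e2
      have hel : c*(a*b) = (c*a)*b := by group
      rw [hel] at e1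
      have heta : Z*(X*Y) = Y*(X*Z) := by
        rcases e1 with h1 | h1 <;> rcases e2 with h2 | h2
        · exfalso; apply hac'
          have h3 := h1.symm.trans h2
          simp only [← mul_assoc] at h3
          exact mul_right_cancel h3
        · exact h1.symm.trans h2
        · exfalso; apply hBC
          have h3 := h1.symm.trans h2
          simp only [mul_assoc] at h3
          exact mul_left_cancel h3
        · exfalso; apply hab'
          have h3 := h1.symm.trans h2
          have h4 : (X*Y)*Z = (Y*X)*Z := by rw [h3, mul_assoc]
          exact mul_right_cancel h4
      apply hac'
      have h4 : Y*(Z*X) = Y*(X*Z) := by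
        calc Y*(Z*X) = Z*X*Y := hQ
        _ = Z*(X*Y) := by rw [mul_assoc]
        _ = Y*(X*Z) := heta
      exact mul_left_cancel h4

end Scott2
end Chein

namespace Chein
section Scott3
variable {A B : Type*} [Group A] [Group B] {φ : A → B}

/-- Scott's theorem for bijective half-homomorphisms. -/
lemma sc_scott (hinj : Function.Injective φ)
    (hh : ∀ x y : A, φ (x*y) = φ x * φ y ∨ φ (x*y) = φ y * φ x) :
    (∀ x y : A, φ (x*y) = φ x * φ y) ∨ (∀ x y : A, φ (x*y) = φ y * φ x) := by
  by_contra hcon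
  push_neg at hcon
  obtain ⟨⟨a, b, hab⟩, c, d, hcd⟩ := hcon
  -- (a,b) is a strict bad pair, (c,d) a strict good pair
  have hab1 : φ (a*b) = φ b * φ a := (hh a b).resolve_left hab
  have hab2 : φ b * φ a ≠ φ a * φ b := fun h => hab (hab1.trans h)
  have hcd1 : φ (c*d) = φ c * φ d := (hh c d).resolve_right hcd
  have hcd2 : φ c * φ d ≠ φ d * φ c := fun h => hcd (hcd1.trans h)
  -- uniform good at base c
  have hgood : ∀ x, φ (c*x) = φ c * φ x := by
    intro x
    by_contra hx
    have h1 : φ (c*x) = φ x * φ c := (hh c x).resolve_left hx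
    have h2 : φ x * φ c ≠ φ c * φ x := fun h => hx (h1.trans h)
    exact sc_mixed hinj hh c d x hcd1 hcd2 h1 h2
  -- uniform bad at base a
  have hbad : ∀ x, φ (a*x) = φ x * φ a := by
    intro x
    by_contra hx
    have h1 : φ (a*x) = φ a * φ x := (hh a x).resolve_right hx
    have h2 : φ a * φ x ≠ φ x * φ a := fun h => hx (h1.trans h)
    exact sc_mixed hinj hh a x b h1 h2 hab1 hab2
  -- key pointwise dichotomy
  have key : ∀ x : A, φ x * φ a = φ a * φ x ∨ φ c * φ x = φ x * φ c := by
    intro x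
    have e1 : φ (c*(a*x)) = φ c * (φ x * φ a) := by rw [hgood, hbad]
    have hel : c*(a*x) = (c*a)*x := by group
    have hca : φ (c*a) = φ c * φ a := hgood a
    have e2 := hh (c*a) x
    rw [← hel, e1, hca] at e2
    rcases e2 with h | h
    · left
      have h4 : φ c * (φ x * φ a) = φ c * (φ a * φ x) := by rw [h, mul_assoc]
      exact mul_left_cancel h4
    · right
      have h4 : (φ c * φ x) * φ a = (φ x * φ c) * φ a := by
        rw [mul_assoc, h, ← mul_assoc]
      exact mul_right_cancel h4
  -- instantiate
  have hCB : φ c * φ b = φ b * φ c := (key b).resolve_left hab2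
  have hDA : φ d * φ a = φ a * φ d :=
    (key d).resolve_right (fun h => hcd2 h)
  rcases hh d b with hdb | hdb
  · rcases key (d*b) with h | h <;> rw [hdb] at h
    · apply hab2
      have h4 : φ d * (φ b * φ a) = φ d * (φ a * φ b) := by
        calc φ d * (φ b * φ a) = (φ d * φ b) * φ a := by rw [mul_assoc]
        _ = φ a * (φ d * φ b) := h
        _ = (φ a * φ d) * φ b := by rw [mul_assoc]
        _ = (φ d * φ a) * φ b := by rw [hDA]
        _ = φ d * (φ a * φ b) := by rw [mul_assoc]
      exact mul_left_cancel h4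
    · apply hcd2
      have h4 : (φ c * φ d) * φ b = (φ d * φ c) * φ b := by
        calc (φ c * φ d) * φ b = φ c * (φ d * φ b) := by rw [mul_assoc]
        _ = (φ d * φ b) * φ c := h
        _ = φ d * (φ b * φ c) := by rw [mul_assoc]
        _ = φ d * (φ c * φ b) := by rw [← hCB]
        _ = (φ d * φ c) * φ b := by rw [mul_assoc]
      exact mul_right_cancel h4
  · rcases key (d*b) with h | h <;> rw [hdb] at h
    · apply hab2
      have h4 : (φ b * φ a) * φ d = (φ a * φ b) * φ d := by
        calc (φ b * φ a) * φ d = φ b * (φ a * φ d) := by rw [mul_assoc]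
        _ = φ b * (φ d * φ a) := by rw [hDA]
        _ = (φ b * φ d) * φ a := by rw [mul_assoc]
        _ = φ a * (φ b * φ d) := h
        _ = (φ a * φ b) * φ d := by rw [mul_assoc]
      exact mul_right_cancel h4
    · apply hcd2
      have h4 : φ b * (φ c * φ d) = φ b * (φ d * φ c) := by
        calc φ b * (φ c * φ d) = (φ b * φ c) * φ d := by rw [mul_assoc]
        _ = (φ c * φ b) * φ d := by rw [hCB]
        _ = φ c * (φ b * φ d) := by rw [mul_assoc]
        _ = (φ b * φ d) * φ c := h
        _ = φ b * (φ d * φ c) := by rw [mul_assoc]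
      exact mul_left_cancel h4

end Scott3
end Chein

namespace Chein
section Delta
variable {Γ : Type*} [Group Γ]

lemma order_four {v : Γ} (h4 : (v*v)*(v*v) = 1) (h2 : v*v ≠ 1) : orderOf v = 4 := by
  have h4' : v^(4:ℕ) = 1 := by
    have h : v^(4:ℕ) = (v*v)*(v*v) := by
      rw [show (4:ℕ) = 2+2 from rfl, pow_add, pow_two]
    rw [h, h4]
  have hdvd : orderOf v ∣ 4 := orderOf_dvd_of_pow_eq_one h4'
  have hne1 : orderOf v ≠ 1 := by
    intro h
    exact h2 (by rw [orderOf_eq_one_iff.mp h]; simp)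
  have hne2 : orderOf v ≠ 2 := by
    intro h
    apply h2
    have hp := pow_orderOf_eq_one v
    rw [h, pow_two] at hp
    exact hp
  have hle : orderOf v ≤ 4 := Nat.le_of_dvd (by norm_num) hdvd
  interval_cases h : orderOf v <;> simp_all <;> omega

lemma delta_special (hna : ∃ a b : Γ, a*b ≠ b*a)
    (D : Γ → Γ) (hD : ∀ x, D x = x ∨ D x = x⁻¹)
    (hinj : Function.Injective D)
    (hd : ∀ y x, D (y*x) = D y * x ∨ D (y*x) = D y * x⁻¹)
    (he : ∀ y x, y⁻¹*x = (D y)⁻¹ * D x ∨ y⁻¹*x = (D x)⁻¹ * D y)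
    (W : Γ) (hW : D W = W⁻¹) (hW2 : W*W ≠ 1) :
    orderOf W = 4 ∧ ∀ u v : Γ, W = u*v → orderOf u = 4 ∨ orderOf v = 4 := by
  have hD1 : D 1 = 1 := by rcases hD 1 with h|h <;> simpa using h
  have hKofInvol : ∀ k : Γ, k*k = 1 → D k = k := by
    intro k hk
    rcases hD k with h|h
    · exact h
    · rw [h, inv_eq_of_mul_eq_one_right hk]
  have hmem : ∀ z : Γ, D z = z ∨ (D z = z⁻¹ ∧ z*z ≠ 1) := by
    intro z
    rcases hD z with h|h
    · exact Or.inl h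
    · by_cases hz2 : z*z = 1
      · exact Or.inl (by rw [h, inv_eq_of_mul_eq_one_right hz2])
      · exact Or.inr ⟨h, hz2⟩
  have hIsq : ∀ x : Γ, D x = x⁻¹ → x*x ≠ 1 → D (x*x) = (x*x)⁻¹ := by
    intro x hx hx2
    rcases hd x x with h|h
    · rw [hx, inv_mul_cancel] at h
      exact absurd (hinj (h.trans hD1.symm)) hx2
    · rw [hx, ← mul_inv_rev] at h
      exact h
  have hT1 : ∀ y k : Γ, D y = y⁻¹ → y*y ≠ 1 → D k = k → y*k*y⁻¹ = k⁻¹ := by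
    intro y k hy hy2 hk
    rcases he y k with h|h
    · rw [hy, hk, inv_inv] at h
      exfalso; apply hy2
      have h2 := mul_right_cancel h
      have h3 := congrArg (fun z : Γ => y*z) h2
      rw [← h3]
      exact mul_inv_cancel y
    · rw [hy, hk] at h
      have h2 : k = y*k⁻¹*y⁻¹ := by
        calc k = y*(y⁻¹*k) := by group
        _ = y*(k⁻¹*y⁻¹) := by rw [h]
        _ = y*k⁻¹*y⁻¹ := by group
      calc y*k*y⁻¹ = (y*k⁻¹*y⁻¹)⁻¹ := by group
      _ = k⁻¹ := by rw [← h2]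
  have hS2 : ∀ y x : Γ, D y = y⁻¹ → D x = x⁻¹ → (x*y = y*x ∨ x*x = y*y) := by
    intro y x hy hx
    rcases he y x with h|h
    · rw [hy, hx, inv_inv] at h
      right
      calc x*x = y*(y⁻¹*x)*x := by group
      _ = y*(y*x⁻¹)*x := by rw [h]
      _ = y*y := by group
    · rw [hy, hx, inv_inv] at h
      left
      calc x*y = y*(y⁻¹*x)*y := by group
      _ = y*(x*y⁻¹)*y := by rw [h]
      _ = y*x := by group
  have hR1 : ∀ y x : Γ, D y = y → D (y*x) = (y*x)⁻¹ → (y*x)*(y*x) ≠ 1 →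
      x*y*x⁻¹ = y⁻¹ := by
    intro y x hy hyx hyx2
    rcases hd y x with h|h <;> rw [hyx, hy] at h
    · exfalso; apply hyx2
      have h2 := congrArg (fun z : Γ => (y*x) * z) h
      simp only [mul_inv_cancel] at h2
      exact h2.symm
    · calc x*y*x⁻¹ = x*(y*x⁻¹) := by group
      _ = x*(y*x)⁻¹ := by rw [← h]
      _ = y⁻¹ := by group
  have hR2 : ∀ y x : Γ, D y = y⁻¹ → y*y ≠ 1 → D (y*x) = y*x → y*y = x⁻¹*x⁻¹ := by
    intro y x hy hy2 hyx
    rcases hd y x with h|h <;> rw [hyx, hy] at h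
    · exfalso; apply hy2
      have h2 := mul_right_cancel h
      have h3 := congrArg (fun z : Γ => y*z) h2
      rw [h3]
      exact mul_inv_cancel y
    · have h3 : (y*y)*(x*x) = 1 := by
        calc (y*y)*(x*x) = y*(y*x)*x := by group
        _ = y*(y⁻¹*x⁻¹)*x := by rw [h]
        _ = 1 := by group
      rw [eq_inv_of_mul_eq_one_left h3, mul_inv_rev]
  have hR3 : ∀ y x : Γ, D y = y⁻¹ → D (y*x) = (y*x)⁻¹ →
      (x*y = y*x ∨ y*x*y⁻¹ = x⁻¹) := by
    intro y x hy hyx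
    rcases hd y x with h|h <;> rw [hyx, hy] at h
    · right
      have h2 : x⁻¹*y⁻¹ = y⁻¹*x := by rw [← mul_inv_rev, h]
      have h3 : y*x⁻¹*y⁻¹ = x := by
        calc y*x⁻¹*y⁻¹ = y*(x⁻¹*y⁻¹) := by group
        _ = y*(y⁻¹*x) := by rw [h2]
        _ = x := by group
      calc y*x*y⁻¹ = (y*x⁻¹*y⁻¹)⁻¹ := by group
      _ = x⁻¹ := by rw [h3]
    · left
      have h2 : x⁻¹*y⁻¹ = y⁻¹*x⁻¹ := by rw [← mul_inv_rev, h]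
      have h3 := congrArg (fun z : Γ => z⁻¹) h2
      simp only [mul_inv_rev, inv_inv] at h3
      exact h3.symm
  -- st2 : no I element can have its square in I
  have hst2 : ∀ x : Γ, D x = x⁻¹ → x*x ≠ 1 → D (x*x) = (x*x)⁻¹ →
      (x*x)*(x*x) ≠ 1 → False := by
    intro x hx hx2 hxx hxx2
    have hKinvol : ∀ k : Γ, D k = k → k*k = 1 := by
      intro k hk
      have h1 := hT1 x k hx hx2 hk
      have h2 := hT1 (x*x) k hxx hxx2 hk
      have h4 : (x*x)*k*(x*x)⁻¹ = x*(x*k*x⁻¹)*x⁻¹ := by group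
      rw [h1] at h4
      have h5 : x*k⁻¹*x⁻¹ = (x*k*x⁻¹)⁻¹ := by group
      rw [h1, inv_inv] at h5
      rw [h5] at h4
      have h3 : k = k⁻¹ := h4.symm.trans h2
      have h7 := congrArg (fun z : Γ => k*z) h3
      rw [h7]
      exact mul_inv_cancel k
    have hL2 : ∀ p q : Γ, D p = p⁻¹ → p*p ≠ 1 → D q = q⁻¹ → q*q ≠ 1 → p*q ≠ q*p →
        p*p = q*q ∧ (q*q)*(q*q) = 1 := by
      intro p q hp hp2 hq hq2 hnc
      have hsq : p*p = q*q := (hS2 q p hq hp).resolve_left hnc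
      refine ⟨hsq, ?_⟩
      rcases hmem (p*q) with hk | ⟨hi, hi2⟩
      · have h1 := hR2 p q hp hp2 hk
        calc (q*q)*(q*q) = (q*q)*(p*p) := by rw [hsq]
        _ = (q*q)*(q⁻¹*q⁻¹) := by rw [h1]
        _ = 1 := by group
      · have hnc' : ¬ q*p = p*q := fun hcc => hnc hcc.symm
        have h1 := (hR3 p q hp hi).resolve_left hnc'
        have h2 : q⁻¹*q⁻¹ = p*(q*q)*p⁻¹ := by
          calc q⁻¹*q⁻¹ = (p*q*p⁻¹)*(p*q*p⁻¹) := by rw [h1]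
          _ = p*(q*q)*p⁻¹ := by group
        have h3 : q⁻¹*q⁻¹ = q*q := by
          rw [h2, ← hsq]
          group
        calc (q*q)*(q*q) = (q*q)*(q⁻¹*q⁻¹) := by rw [h3]
        _ = 1 := by group
    have hcen : ∀ z : Γ, D z = z⁻¹ → z*z ≠ 1 → x*z = z*x := by
      intro z hz hz2
      by_contra hnc
      obtain ⟨hsq, h4⟩ := hL2 x z hx hx2 hz hz2 hnc
      exact hxx2 (by rw [hsq]; exact h4)
    obtain ⟨a, b, hab⟩ := hna
    rcases hmem a with hKa | ⟨hIa, hIa2⟩ <;> rcases hmem b with hKb | ⟨hIb, hIb2⟩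
    · have ha2 := hKinvol a hKa
      have hb2 := hKinvol b hKb
      by_cases hab2 : (a*b)*(a*b) = 1
      · apply hab
        have h1 : a*b = (a*b)⁻¹ := (inv_eq_of_mul_eq_one_right hab2).symm
        calc a*b = (a*b)⁻¹ := h1
        _ = b⁻¹*a⁻¹ := mul_inv_rev a b
        _ = b*a := by rw [inv_eq_of_mul_eq_one_right hb2, inv_eq_of_mul_eq_one_right ha2]
      · rcases hmem (a*b) with hk | ⟨hi, hi2⟩
        · exact hab2 (hKinvol _ hk)
        · have h1 := hR1 a b hKa hi hab2
          apply hab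
          have h2 : b*a*b⁻¹ = a := by rw [h1, inv_eq_of_mul_eq_one_right ha2]
          calc a*b = (b*a*b⁻¹)*b := by rw [h2]
          _ = b*a := by group
    · have ha2 := hKinvol a hKa
      have h1 := hT1 b a hIb hIb2 hKa
      apply hab
      have h2 : b*a*b⁻¹ = a := by rw [h1, inv_eq_of_mul_eq_one_right ha2]
      calc a*b = (b*a*b⁻¹)*b := by rw [h2]
      _ = b*a := by group
    · have hb2 := hKinvol b hKb
      have h1 := hT1 a b hIa hIa2 hKb
      apply hab
      have h2 : a*b*a⁻¹ = b := by rw [h1, inv_eq_of_mul_eq_one_right hb2]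
      calc a*b = (a*b*a⁻¹)*a := by group
      _ = b*a := by rw [h2]
    · have hxa := hcen a hIa hIa2
      have hxb := hcen b hIb hIb2
      obtain ⟨hsab, -⟩ := hL2 a b hIa hIa2 hIb hIb2 hab
      by_cases hXA2 : (x*a)*(x*a) = 1
      · have hk := hKofInvol (x*a) hXA2
        have h1 := hT1 b (x*a) hIb hIb2 hk
        have h2 : (x*a)⁻¹ = x*a := inv_eq_of_mul_eq_one_right hXA2
        rw [h2] at h1
        apply hab
        have h3 : b*(x*a) = (x*a)*b := by
          calc b*(x*a) = b*(x*a)*b⁻¹*b := by group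
          _ = (x*a)*b := by rw [h1]
        have h4 : x*(b*a) = x*(a*b) := by
          calc x*(b*a) = (x*b)*a := by group
          _ = (b*x)*a := by rw [hxb]
          _ = b*(x*a) := by group
          _ = (x*a)*b := h3
          _ = x*(a*b) := by group
        exact (mul_left_cancel h4).symm
      · rcases hmem (x*a) with hk | ⟨hi, hi2⟩
        · exact hXA2 (hKinvol _ hk)
        · have hnc : (x*a)*b ≠ b*(x*a) := by
            intro hcc
            apply hab
            have h4 : x*(a*b) = x*(b*a) := by
              calc x*(a*b) = (x*a)*b := by group
              _ = b*(x*a) := hcc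
              _ = (b*x)*a := by group
              _ = (x*b)*a := by rw [hxb]
              _ = x*(b*a) := by group
            exact mul_left_cancel h4
          obtain ⟨hsq2, -⟩ := hL2 (x*a) b hi hXA2 hIb hIb2 hnc
          apply hx2
          have h5 : (x*x)*(a*a) = a*a := by
            calc (x*x)*(a*a) = x*(x*a)*a := by group
            _ = x*(a*x)*a := by rw [hxa]
            _ = (x*a)*(x*a) := by group
            _ = b*b := hsq2
            _ = a*a := hsab.symm
          have h6 : (x*x)*(a*a) = 1*(a*a) := by rw [h5, one_mul]
          exact mul_right_cancel h6
  -- every strict I element has order 4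
  have hSt1 : ∀ z : Γ, D z = z⁻¹ → z*z ≠ 1 → (z*z)*(z*z) = 1 := by
    intro z hz hz2
    by_contra h4
    exact hst2 z hz hz2 (hIsq z hz hz2) h4
  have hW4 := hSt1 W hW hW2
  refine ⟨order_four hW4 hW2, ?_⟩
  intro u v huv
  rcases hmem u with hKu | ⟨hIu, hIu2⟩
  · right
    have hDuv : D (u*v) = (u*v)⁻¹ := by rw [← huv]; exact hW
    have huv2 : (u*v)*(u*v) ≠ 1 := by rw [← huv]; exact hW2
    have h1 := hR1 u v hKu hDuv huv2
    have h4 : W*W = v*v := by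
      calc W*W = (u*v)*(u*v) := by rw [huv]
      _ = u*(v*u*v⁻¹)*(v*v) := by group
      _ = u*u⁻¹*(v*v) := by rw [h1]
      _ = v*v := by group
    have hv4 : (v*v)*(v*v) = 1 := by rw [← h4]; exact hW4
    have hv2 : v*v ≠ 1 := by rw [← h4]; exact hW2
    exact order_four hv4 hv2
  · left
    exact order_four (hSt1 u hIu hIu2) hIu2

end Delta
end Chein

namespace Chein
section Core
variable {G : Type*} [Group G]

lemma engine_core (hnab : ∃ a b : G, a*b ≠ b*a)
    (Θ E : G → G)
    (hhom : ∀ p q, Θ (p*q) = Θ p * Θ q)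
    (hbij : Function.Bijective Θ)
    (hEinj : Function.Injective E)
    (hE1 : E 1 = 1)
    (hA2 : ∀ p q, E (q*p) = E q * Θ p ∨ E (q*p) = E q * (Θ p)⁻¹)
    (hA3 : ∀ p q, Θ (q⁻¹*p) = (E q)⁻¹ * E p ∨ Θ (q⁻¹*p) = (E p)⁻¹ * E q)
    (w : G) (hw : E w ≠ Θ w) :
    ∃ y : G, orderOf y = 4 ∧ ∀ g h : G, y = g*h → orderOf g = 4 ∨ orderOf h = 4 := by
  have hEopt : ∀ p, E p = Θ p ∨ E p = (Θ p)⁻¹ := by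
    intro p
    have h := hA2 p 1
    rw [one_mul, hE1, one_mul] at h
    rcases h with h|h
    · exact Or.inl h
    · rw [one_mul] at h; exact Or.inr h
  let θm : G →* G := MonoidHom.mk' Θ (fun a b => hhom a b)
  let e : G ≃* G := MulEquiv.ofBijective θm hbij
  have heap : ∀ z, e z = Θ z := fun z => rfl
  have heΘ : ∀ Z, Θ (e.symm Z) = Z := by
    intro Z
    have := e.apply_symm_apply Z
    rw [← heap (e.symm Z)] at *
    exact this
  have hesa : ∀ z, e.symm (Θ z) = z := by
    intro z
    have := e.symm_apply_apply z
    rw [heap z] at this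
    exact this
  set D : G → G := fun Z => E (e.symm Z) with hDdef
  have hD : ∀ Z, D Z = Z ∨ D Z = Z⁻¹ := by
    intro Z
    rcases hEopt (e.symm Z) with h|h
    · left; rw [hDdef]; simp only; rw [h, heΘ]
    · right; rw [hDdef]; simp only; rw [h, heΘ]
  have hDinj : Function.Injective D := by
    intro a b hab
    exact e.symm.injective (hEinj hab)
  have hd : ∀ Y X, D (Y*X) = D Y * X ∨ D (Y*X) = D Y * X⁻¹ := by
    intro Y X
    have h := hA2 (e.symm X) (e.symm Y)
    rw [← map_mul, heΘ] at h
    exact h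
  have he : ∀ Y X, Y⁻¹*X = (D Y)⁻¹ * D X ∨ Y⁻¹*X = (D X)⁻¹ * D Y := by
    intro Y X
    have h := hA3 (e.symm X) (e.symm Y)
    have hq : (e.symm Y)⁻¹ * (e.symm X) = e.symm (Y⁻¹*X) := by
      rw [map_mul, map_inv]
    rw [hq, heΘ] at h
    exact h
  set W : G := Θ w with hWdef
  have hW : D W = W⁻¹ := by
    have h1 : D W = E w := by
      show E (e.symm (Θ w)) = E w
      rw [hesa]
    rw [h1]
    exact (hEopt w).resolve_left hw
  have hW2 : W*W ≠ 1 := by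
    intro hcc
    apply hw
    have : W⁻¹ = W := inv_eq_of_mul_eq_one_right hcc
    have h1 : E w = W⁻¹ := by
      have h2 : D W = E w := by
        show E (e.symm (Θ w)) = E w
        rw [hesa]
      rw [← h2, hW]
    rw [h1, this]
  obtain ⟨h4, hsp⟩ := delta_special hnab D hD hDinj hd he W hW hW2
  exact ⟨W, h4, hsp⟩
end Core
end Chein

namespace Chein
section Conc
variable {G : Type*} [Group G]

lemma cmul_ff (g h : G) : cmul (g,false) (h,false) = (g*h, false) := rfl
lemma cmul_ft (g h : G) : cmul (g,false) (h,true) = (h*g, true) := rfl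
lemma cmul_tf (g h : G) : cmul (g,true) (h,false) = (g*h⁻¹, true) := rfl
lemma cmul_tt (g h : G) : cmul (g,true) (h,true) = (h⁻¹*g, false) := rfl

lemma cmul_snd (x y : G×Bool) : (cmul x y).2 = xor x.2 y.2 := by
  rcases x with ⟨g, _|_⟩ <;> rcases y with ⟨h, _|_⟩ <;> rfl

lemma cmul_idem (z : G×Bool) (h : cmul z z = z) : z = ((1:G), false) := by
  rcases z with ⟨g, _|_⟩
  · rw [cmul_ff] at h
    injection h with h1 _
    rw [mul_eq_right.mp h1]
  · rw [cmul_tt] at h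
    injection h with _ h2
    exact Bool.noConfusion h2

lemma cmul_uu {u' : G×Bool} (h : cmul u' u' = ((1:G),false)) (w : G×Bool) :
    cmul (cmul w u') u' = w := by
  rcases u' with ⟨s, _|_⟩
  · rw [cmul_ff] at h
    injection h with h1 _
    rcases w with ⟨g, _|_⟩
    · rw [cmul_ff, cmul_ff, mul_assoc, h1, mul_one]
    · rw [cmul_tf, cmul_tf]
      have h2 : g*s⁻¹*s⁻¹ = g := by
        rw [mul_assoc, ← mul_inv_rev, h1, inv_one, mul_one]
      rw [h2]
  · rcases w with ⟨g, _|_⟩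
    · rw [cmul_ft, cmul_tt, inv_mul_cancel_left]
    · rw [cmul_tt, cmul_ft, mul_inv_cancel_left]

lemma engine
    (f : G×Bool → G×Bool)
    (hinj : Function.Injective f)
    (hsurj : Function.Surjective f)
    (hh : ∀ x y, f (cmul x y) = cmul (f x) (f y) ∨ f (cmul x y) = cmul (f y) (f x))
    (hnh : ¬ ∀ x y, f (cmul x y) = cmul (f x) (f y))
    (hnah : ¬ ∀ x y, f (cmul x y) = cmul (f y) (f x))
    (hnab : ∃ a b : G, a*b ≠ b*a)
    (Φ : G → G×Bool) (u' : G×Bool)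
    (hu' : (f u').2 = true)
    (hΦH : ∀ p, (f (Φ p)).2 = false)
    (hΦinj : Function.Injective Φ)
    (hΦmul : ∀ p q, cmul (Φ p) (Φ q) = Φ (p*q))
    (hΦsurj : ∀ x, (f x).2 = false → ∃ p, Φ p = x)
    (hE1 : ∀ p q, cmul (Φ p) (cmul (Φ q) u') = cmul (Φ (q*p)) u')
    (hE2 : ∀ p q, cmul (cmul (Φ p) u') (cmul (Φ q) u') = Φ (q⁻¹*p))
    (hE4 : ∀ p q, cmul (cmul (Φ p) u') (Φ q) = cmul (Φ (p*q⁻¹)) u') :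
    ∃ y : G, orderOf y = 4 ∧ ∀ g h : G, y = g*h → orderOf g = 4 ∨ orderOf h = 4 := by
  have hONE : f ((1:G), false) = ((1:G), false) := by
    have e0 : cmul ((1:G),false) ((1:G),false) = ((1:G),false) := by rw [cmul_ff, one_mul]
    have h : f (cmul ((1:G),false) ((1:G),false))
        = cmul (f ((1:G),false)) (f ((1:G),false)) :=
      (hh ((1:G),false) ((1:G),false)).elim id id
    rw [e0] at h
    exact cmul_idem _ h.symm
  have hsnd : ∀ x y, (f (cmul x y)).2 = xor (f x).2 (f y).2 := by
    intro x y
    rcases hh x y with h|h <;> rw [h, cmul_snd]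
    exact Bool.xor_comm _ _
  have hΦ1 : Φ 1 = ((1:G), false) := by
    apply cmul_idem
    rw [hΦmul, one_mul]
  set Θ : G → G := fun p => (f (Φ p)).1 with hΘdef
  have hfΦ : ∀ p, f (Φ p) = (Θ p, false) := by
    intro p
    exact Prod.ext rfl (hΦH p)
  set Bm : G → G := fun p => (f (cmul (Φ p) u')).1 with hBdef
  have hCu : ∀ p, (f (cmul (Φ p) u')).2 = true := by
    intro p
    rw [hsnd, hΦH, hu']
    rfl
  have hfB : ∀ p, f (cmul (Φ p) u') = (Bm p, true) := fun p => Prod.ext rfl (hCu p)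
  have huu : cmul u' u' = ((1:G), false) := by
    apply hinj
    rw [hONE]
    have h : f (cmul u' u') = cmul (f u') (f u') := (hh u' u').elim id id
    obtain ⟨z, hz⟩ : ∃ z, f u' = (z, true) := ⟨(f u').1, Prod.ext rfl hu'⟩
    rw [h, hz, cmul_tt, inv_mul_cancel]
  have hUU : ∀ w, cmul (cmul w u') u' = w := cmul_uu huu
  have hCpar : ∀ z : G×Bool, (f z).2 = true → ∃ p, cmul (Φ p) u' = z := by
    intro z hz
    have hz2 : (f (cmul z u')).2 = false := by rw [hsnd, hz, hu']; rfl
    obtain ⟨p, hp⟩ := hΦsurj _ hz2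
    exact ⟨p, by rw [hp]; exact hUU z⟩
  have hΘ1 : Θ 1 = 1 := by simp only [hΘdef]; rw [hΦ1, hONE]
  have hΘinj : Function.Injective Θ := by
    intro p q hpq
    apply hΦinj; apply hinj
    rw [hfΦ, hfΦ, hpq]
  have hΘsurj : Function.Surjective Θ := by
    intro Z
    obtain ⟨x, hx⟩ := hsurj (Z, false)
    have hx2 : (f x).2 = false := by rw [hx]
    obtain ⟨p, hp⟩ := hΦsurj x hx2
    exact ⟨p, by simp only [hΘdef]; rw [hp, hx]⟩
  have hΘhalf : ∀ p q, Θ (p*q) = Θ p * Θ q ∨ Θ (p*q) = Θ q * Θ p := by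
    intro p q
    have h := hh (Φ p) (Φ q)
    rw [hΦmul, hfΦ, hfΦ, hfΦ, cmul_ff, cmul_ff] at h
    rcases h with h|h
    · left; exact congrArg Prod.fst h
    · right; exact congrArg Prod.fst h
  have hA2raw : ∀ p q, Bm (q*p) = Bm q * Θ p ∨ Bm (q*p) = Bm q * (Θ p)⁻¹ := by
    intro p q
    have h := hh (Φ p) (cmul (Φ q) u')
    rw [hE1, hfB, hfΦ, hfB, cmul_ft, cmul_tf] at h
    rcases h with h|h
    · left; exact congrArg Prod.fst h
    · right; exact congrArg Prod.fst h
  have hA3raw : ∀ p q, Θ (q⁻¹*p) = (Bm q)⁻¹ * Bm p ∨ Θ (q⁻¹*p) = (Bm p)⁻¹ * Bm q := by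
    intro p q
    have h := hh (cmul (Φ p) u') (cmul (Φ q) u')
    rw [hE2, hfΦ, hfB, hfB, cmul_tt, cmul_tt] at h
    rcases h with h|h
    · left; exact congrArg Prod.fst h
    · right; exact congrArg Prod.fst h
  set E : G → G := fun p => (Bm 1)⁻¹ * Bm p with hEdef
  have hE1' : E 1 = 1 := by simp only [hEdef]; rw [inv_mul_cancel]
  have hBinj : Function.Injective Bm := by
    intro p q hpq
    apply hΦinj
    have h1 : cmul (Φ p) u' = cmul (Φ q) u' := by
      apply hinj; rw [hfB, hfB, hpq]
    have h2 := congrArg (fun z => cmul z u') h1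
    rw [hUU, hUU] at h2
    exact h2
  have hEinj : Function.Injective E := by
    intro p q hpq
    simp only [hEdef] at hpq
    exact hBinj (mul_left_cancel hpq)
  have hA2 : ∀ p q, E (q*p) = E q * Θ p ∨ E (q*p) = E q * (Θ p)⁻¹ := by
    intro p q
    rcases hA2raw p q with h|h
    · left; simp only [hEdef]; rw [h, mul_assoc]
    · right; simp only [hEdef]; rw [h, mul_assoc]
  have hA3 : ∀ p q, Θ (q⁻¹*p) = (E q)⁻¹ * E p ∨ Θ (q⁻¹*p) = (E p)⁻¹ * E q := by
    intro p q
    rcases hA3raw p q with h|h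
    · left; simp only [hEdef]; rw [h]; group
    · right; simp only [hEdef]; rw [h]; group
  have hrep : ∀ z : G×Bool, (∃ p, Φ p = z) ∨ (∃ p, cmul (Φ p) u' = z) := by
    intro z
    rcases Bool.eq_false_or_eq_true (f z).2 with hz|hz
    · right; exact hCpar z hz
    · left; exact hΦsurj z hz
  -- hom transfer
  have htrans : (∀ p q, Θ (p*q) = Θ p * Θ q) → (∀ p, E p = Θ p) → False := by
    intro hΘh hEh
    apply hnh
    have hB : ∀ p, Bm p = Bm 1 * Θ p := by
      intro p
      have h := hEh p
      simp only [hEdef] at h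
      rw [← h]; group
    have hΘinv : ∀ p, Θ p⁻¹ = (Θ p)⁻¹ := by
      intro p
      have h := hΘh p p⁻¹
      rw [mul_inv_cancel, hΘ1] at h
      exact eq_inv_of_mul_eq_one_right h.symm
    intro x y
    rcases hrep x with ⟨p, hp⟩|⟨p, hp⟩ <;> rcases hrep y with ⟨q, hq⟩|⟨q, hq⟩ <;>
      subst hp <;> subst hq
    · rw [hΦmul, hfΦ, hfΦ, hfΦ, cmul_ff]
      simp only [Prod.mk.injEq]
      exact ⟨hΘh p q, trivial⟩
    · rw [hE1, hfB, hfΦ, hfB, cmul_ft]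
      simp only [Prod.mk.injEq]
      refine ⟨?_, trivial⟩
      rw [hB (q*p), hB q, hΘh q p]; group
    · rw [hE4, hfB, hfB, hfΦ, cmul_tf]
      simp only [Prod.mk.injEq]
      refine ⟨?_, trivial⟩
      rw [hB (p*q⁻¹), hB p, hΘh p q⁻¹, hΘinv q]; group
    · rw [hE2, hfΦ, hfB, hfB, cmul_tt]
      simp only [Prod.mk.injEq]
      refine ⟨?_, trivial⟩
      rw [hΘh q⁻¹ p, hΘinv q, hB p, hB q]
      group
  -- antihom transfer
  have htrans' : (∀ p q, Θ (p*q) = Θ q * Θ p) → (∀ p, E p = (Θ p)⁻¹) → False := by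
    intro hΘh hEh
    apply hnah
    have hB : ∀ p, Bm p = Bm 1 * (Θ p)⁻¹ := by
      intro p
      have h := hEh p
      simp only [hEdef] at h
      rw [← h]; group
    have hΘinv : ∀ p, Θ p⁻¹ = (Θ p)⁻¹ := by
      intro p
      have h := hΘh p⁻¹ p
      rw [inv_mul_cancel, hΘ1] at h
      exact eq_inv_of_mul_eq_one_right h.symm
    intro x y
    rcases hrep x with ⟨p, hp⟩|⟨p, hp⟩ <;> rcases hrep y with ⟨q, hq⟩|⟨q, hq⟩ <;>
      subst hp <;> subst hq
    · rw [hΦmul, hfΦ, hfΦ, hfΦ, cmul_ff]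
      simp only [Prod.mk.injEq]
      exact ⟨hΘh p q, trivial⟩
    · rw [hE1, hfB, hfΦ, hfB, cmul_tf]
      simp only [Prod.mk.injEq]
      refine ⟨?_, trivial⟩
      rw [hB (q*p), hB q, hΘh q p, mul_inv_rev]
      group
    · rw [hE4, hfB, hfB, hfΦ, cmul_ft]
      simp only [Prod.mk.injEq]
      refine ⟨?_, trivial⟩
      rw [hB (p*q⁻¹), hB p, hΘh p q⁻¹, hΘinv q, mul_inv_rev, inv_inv]
      group
    · rw [hE2, hfΦ, hfB, hfB, cmul_tt]
      simp only [Prod.mk.injEq]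
      refine ⟨?_, trivial⟩
      rw [hΘh q⁻¹ p, hΘinv q, hB p, hB q]
      group
  rcases sc_scott hΘinj hΘhalf with hhom | hanti
  · have hwit : ∃ w, E w ≠ Θ w := by
      by_contra hcc
      push_neg at hcc
      exact htrans hhom hcc
    obtain ⟨w, hw⟩ := hwit
    exact engine_core hnab Θ E hhom ⟨hΘinj, hΘsurj⟩ hEinj hE1' hA2 hA3 w hw
  · have hwit : ∃ w, E w ≠ (Θ w)⁻¹ := by
      by_contra hcc
      push_neg at hcc
      exact htrans' hanti hcc
    obtain ⟨w, hw⟩ := hwit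
    set Θ' : G → G := fun p => (Θ p)⁻¹ with hΘ'def
    have hhom' : ∀ p q, Θ' (p*q) = Θ' p * Θ' q := by
      intro p q; simp only [hΘ'def]; rw [hanti p q, mul_inv_rev]
    have hbij' : Function.Bijective Θ' := by
      constructor
      · intro p q hpq
        simp only [hΘ'def] at hpq
        exact hΘinj (inv_injective hpq)
      · intro Z
        obtain ⟨p, hp⟩ := hΘsurj Z⁻¹
        exact ⟨p, by simp only [hΘ'def]; rw [hp, inv_inv]⟩
    have hA2' : ∀ p q, E (q*p) = E q * Θ' p ∨ E (q*p) = E q * (Θ' p)⁻¹ := by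
      intro p q
      rcases hA2 p q with h|h
      · right; simp only [hΘ'def]; rw [inv_inv]; exact h
      · left; simp only [hΘ'def]; exact h
    have hA3' : ∀ p q, Θ' (q⁻¹*p) = (E q)⁻¹ * E p ∨ Θ' (q⁻¹*p) = (E p)⁻¹ * E q := by
      intro p q
      rcases hA3 p q with h|h
      · right; simp only [hΘ'def]; rw [h, mul_inv_rev, inv_inv]
      · left; simp only [hΘ'def]; rw [h, mul_inv_rev, inv_inv]
    have hw' : E w ≠ Θ' w := by simp only [hΘ'def]; exact hw
    exact engine_core hnab Θ' E hhom' hbij' hEinj hE1' hA2' hA3' w hw'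

end Conc
end Chein


/-- If a finite nonabelian group `G` is such that `M(G,2)` has a nontrivial
half-automorphism, then `G` has an element `y` of order `4` such that whenever
`y = gh`, one of `g`, `h` has order `4`. -/
theorem exists_order_four_indecomposable {G : Type*} [Group G] [Finite G]
    (hnab : ∃ a b : G, a * b ≠ b * a)
    (hhalf : ∃ f : G × Bool → G × Bool, IsHalfAut f ∧
      (¬ ∀ x y : G × Bool, f (cmul x y) = cmul (f x) (f y)) ∧
      (¬ ∀ x y : G × Bool, f (cmul x y) = cmul (f y) (f x))) :
    ∃ y : G, orderOf y = 4 ∧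
      ∀ g h : G, y = g * h → orderOf g = 4 ∨ orderOf h = 4 := by
  classical
  obtain ⟨f, ⟨⟨hinj, hsurj⟩, hh⟩, hnh, hnah⟩ := hhalf
  have hONE : f ((1:G), false) = ((1:G), false) := by
    have e0 : cmul ((1:G),false) ((1:G),false) = ((1:G),false) := by
      rw [Chein.cmul_ff, one_mul]
    have h : f (cmul ((1:G),false) ((1:G),false))
        = cmul (f ((1:G),false)) (f ((1:G),false)) :=
      (hh ((1:G),false) ((1:G),false)).elim id id
    rw [e0] at h
    exact Chein.cmul_idem _ h.symm
  have hsnd : ∀ x y, (f (cmul x y)).2 = xor (f x).2 (f y).2 := by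
    intro x y
    rcases hh x y with h|h <;> rw [h, Chein.cmul_snd]
    exact Bool.xor_comm _ _
  set N : G → Prop := fun g => (f (g, false)).2 = false with hNdef
  set Bs : G → Prop := fun g => (f (g, true)).2 = false with hBsdef
  have hnotN : ∀ g, ¬ N g → (f (g, false)).2 = true := by
    intro g hg
    cases hb : (f (g, false)).2
    · exact absurd hb hg
    · rfl
  have hnotB : ∀ g, ¬ Bs g → (f (g, true)).2 = true := by
    intro g hg
    cases hb : (f (g, true)).2
    · exact absurd hb hg
    · rfl
  have hP : ∀ g h : G, (f ((g*h : G), false)).2 = xor (f (g,false)).2 (f (h,false)).2 := by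
    intro g h
    rw [← Chein.cmul_ff g h, hsnd]
  have hPft : ∀ g h : G, (f ((h*g : G), true)).2 = xor (f (g,false)).2 (f (h,true)).2 := by
    intro g h
    rw [← Chein.cmul_ft g h, hsnd]
  have hPtt : ∀ g h : G, (f ((h⁻¹*g : G), false)).2 = xor (f (g,true)).2 (f (h,true)).2 := by
    intro g h
    rw [← Chein.cmul_tt g h, hsnd]
  have hN1 : N 1 := by show (f ((1:G), false)).2 = false; rw [hONE]
  have hNmul : ∀ g h, N g → N h → N (g*h) := by
    intro g h hg hm
    show (f ((g*h : G), false)).2 = false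
    rw [hP, hg, hm]; rfl
  have hTT : ∀ g h, ¬ N g → ¬ N h → N (g*h) := by
    intro g h hg hm
    show (f ((g*h : G), false)).2 = false
    rw [hP, hnotN g hg, hnotN h hm]; rfl
  have hNT : ∀ g h, N g → ¬ N h → ¬ N (g*h) := by
    intro g h hg hm hc
    have hc' : (f ((g*h : G), false)).2 = false := hc
    rw [hP, hg, hnotN h hm] at hc'
    exact Bool.noConfusion hc'
  have hTN : ∀ g h, ¬ N g → N h → ¬ N (g*h) := by
    intro g h hg hm hc
    have hc' : (f ((g*h : G), false)).2 = false := hc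
    rw [hP, hnotN g hg, hm] at hc'
    exact Bool.noConfusion hc'
  have hTinv : ∀ g, ¬ N g → g*g = 1 := by
    intro g hg
    have h : f (cmul (g,false) (g,false)) = cmul (f (g,false)) (f (g,false)) :=
      (hh _ _).elim id id
    obtain ⟨z, hz⟩ : ∃ z, f (g,false) = (z, true) :=
      ⟨(f (g,false)).1, Prod.ext rfl (hnotN g hg)⟩
    rw [Chein.cmul_ff, hz, Chein.cmul_tt, inv_mul_cancel, ← hONE] at h
    have h2 := hinj h
    injection h2
  have hNinv : ∀ g, N g → N g⁻¹ := by
    intro g hg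
    by_contra hc
    exact hNT g g⁻¹ hg hc (by rw [mul_inv_cancel]; exact hN1)
  have hTinv' : ∀ g, ¬ N g → g⁻¹ = g := by
    intro g hg
    exact inv_eq_of_mul_eq_one_right (hTinv g hg)
  have hTinvmem : ∀ g, ¬ N g → ¬ N g⁻¹ := by
    intro g hg
    rw [hTinv' g hg]
    exact hg
  have hBN : ∀ b n, Bs b → N n → Bs (b*n) := by
    intro b n hb hn
    show (f ((b*n : G), true)).2 = false
    rw [hPft, hn, hb]; rfl
  have hBB : ∀ b b', Bs b → Bs b' → N (b'⁻¹*b) := by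
    intro b b' hb hb'
    show (f ((b'⁻¹*b : G), false)).2 = false
    rw [hPtt, hb, hb']; rfl
  by_cases hB : ∃ b, Bs b
  · -- B nonempty : dihedral configuration
    obtain ⟨b₀, hb₀⟩ := hB
    have hTne : ∃ t, ¬ N t := by
      by_contra hc
      push_neg at hc
      have hBall : ∀ g, Bs g := by
        intro g
        have h1 := hBN b₀ (b₀⁻¹*g) hb₀ (hc _)
        rw [mul_inv_cancel_left] at h1
        exact h1
      obtain ⟨x, hx⟩ := hsurj ((1:G), true)
      rcases x with ⟨g, _|_⟩
      · have h2 : (f ((g:G), false)).2 = false := hc g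
        rw [hx] at h2
        exact Bool.noConfusion h2
      · have h2 : (f ((g:G), true)).2 = false := hBall g
        rw [hx] at h2
        exact Bool.noConfusion h2
    obtain ⟨t₀, ht₀⟩ := hTne
    have ht2 : t₀*t₀ = 1 := hTinv t₀ ht₀
    have hswapT : ∀ t n, ¬ N t → N n → t*n = n⁻¹*t := by
      intro t n ht hn
      have h1 : (t*n)*(t*n) = 1 := hTinv _ (hTN t n ht hn)
      have h3 : (t*n)⁻¹ = t*n := inv_eq_of_mul_eq_one_right h1
      calc t*n = (t*n)⁻¹ := h3.symm
      _ = n⁻¹*t⁻¹ := mul_inv_rev t n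
      _ = n⁻¹*t := by rw [hTinv' t ht]
    have hswapT' : ∀ t n, ¬ N t → N n → n*t = t*n⁻¹ := by
      intro t n ht hn
      rw [hswapT t n⁻¹ ht (hNinv n hn), inv_inv]
    have hconj : ∀ t n, ¬ N t → N n → t*n*t = n⁻¹ := by
      intro t n ht hn
      calc t*n*t = (n⁻¹*t)*t := by rw [hswapT t n ht hn]
      _ = n⁻¹*(t*t) := mul_assoc _ _ _
      _ = n⁻¹ := by rw [hTinv t ht, mul_one]
    have hcom : ∀ n m, N n → N m → n*m = m*n := by
      intro n m hn hm
      have h1 : t₀*(n*m) = (n*m)⁻¹*t₀ := hswapT t₀ (n*m) ht₀ (hNmul n m hn hm)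
      have h2 : t₀*(n*m) = n⁻¹*(m⁻¹*t₀) := by
        calc t₀*(n*m) = (t₀*n)*m := by rw [mul_assoc]
        _ = (n⁻¹*t₀)*m := by rw [hswapT t₀ n ht₀ hn]
        _ = n⁻¹*(t₀*m) := mul_assoc _ _ _
        _ = n⁻¹*(m⁻¹*t₀) := by rw [hswapT t₀ m ht₀ hm]
      have h3 : (n*m)⁻¹*t₀ = (n⁻¹*m⁻¹)*t₀ := by
        rw [h1.symm.trans h2, mul_assoc]
      have h4 : (n*m)⁻¹ = n⁻¹*m⁻¹ := mul_right_cancel h3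
      have h5 : m⁻¹*n⁻¹ = n⁻¹*m⁻¹ := by rw [← mul_inv_rev, h4]
      have h6 := congrArg (fun z : G => z⁻¹) h5
      simp only [mul_inv_rev, inv_inv] at h6
      exact h6
    by_cases hbN : N b₀
    · -- case Y1 : Bs coincides with N
      have hBiff : ∀ g, Bs g ↔ N g := by
        intro g
        constructor
        · intro hg
          have h1 := hBB g b₀ hg hb₀
          have h2 := hNmul b₀ (b₀⁻¹*g) hbN h1
          rw [mul_inv_cancel_left] at h2
          exact h2
        · intro hg
          have h1 := hBN b₀ (b₀⁻¹*g) hb₀ (hNmul b₀⁻¹ g (hNinv b₀ hbN) hg)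
          rw [mul_inv_cancel_left] at h1
          exact h1
      set Φ : G → G × Bool := fun p => if N p then ((p:G), false) else (p*t₀, true) with hΦdef
      have hΦpos : ∀ p, N p → Φ p = (p, false) := by
        intro p hp; simp only [hΦdef]; rw [if_pos hp]
      have hΦneg : ∀ p, ¬ N p → Φ p = (p*t₀, true) := by
        intro p hp; simp only [hΦdef]; rw [if_neg hp]
      have hu' : (f ((t₀:G), false)).2 = true := hnotN t₀ ht₀
      have hΦH : ∀ p, (f (Φ p)).2 = false := by
        intro p
        by_cases hp : N p
        · rw [hΦpos p hp]; exact hp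
        · rw [hΦneg p hp]
          exact (hBiff _).mpr (hTT p t₀ hp ht₀)
      have hΦinj : Function.Injective Φ := by
        intro p q hpq
        by_cases hp : N p <;> by_cases hq : N q
        · rw [hΦpos p hp, hΦpos q hq] at hpq; injection hpq
        · rw [hΦpos p hp, hΦneg q hq] at hpq
          injection hpq with _ h2; exact Bool.noConfusion h2
        · rw [hΦneg p hp, hΦpos q hq] at hpq
          injection hpq with _ h2; exact Bool.noConfusion h2
        · rw [hΦneg p hp, hΦneg q hq] at hpq
          injection hpq with h1 _; exact mul_right_cancel h1
      have hΦsurj : ∀ x : G × Bool, (f x).2 = false → ∃ p, Φ p = x := by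
        intro x hx
        rcases x with ⟨g, _|_⟩
        · exact ⟨g, hΦpos g hx⟩
        · have hg : N g := (hBiff g).mp hx
          refine ⟨g*t₀, ?_⟩
          rw [hΦneg _ (hNT g t₀ hg ht₀), mul_assoc, ht2, mul_one]
      have hΦmul : ∀ p q, cmul (Φ p) (Φ q) = Φ (p*q) := by
        intro p q
        by_cases hp : N p <;> by_cases hq : N q
        · rw [hΦpos p hp, hΦpos q hq, Chein.cmul_ff, hΦpos _ (hNmul p q hp hq)]
        · rw [hΦpos p hp, hΦneg q hq, Chein.cmul_ft, hΦneg _ (hNT p q hp hq)]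
          simp only [Prod.mk.injEq]
          refine ⟨?_, trivial⟩
          calc q*t₀*p = q*(t₀*p) := mul_assoc _ _ _
          _ = q*(p⁻¹*t₀) := by rw [hswapT t₀ p ht₀ hp]
          _ = (q*p⁻¹)*t₀ := (mul_assoc _ _ _).symm
          _ = (p*q)*t₀ := by rw [hswapT q p⁻¹ hq (hNinv p hp), inv_inv]
        · rw [hΦneg p hp, hΦpos q hq, Chein.cmul_tf, hΦneg _ (hTN p q hp hq)]
          simp only [Prod.mk.injEq]
          refine ⟨?_, trivial⟩
          calc p*t₀*q⁻¹ = p*(t₀*q⁻¹) := mul_assoc _ _ _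
          _ = p*(q*t₀) := by rw [hswapT t₀ q⁻¹ ht₀ (hNinv q hq), inv_inv]
          _ = p*q*t₀ := (mul_assoc _ _ _).symm
        · rw [hΦneg p hp, hΦneg q hq, Chein.cmul_tt, hΦpos _ (hTT p q hp hq)]
          simp only [Prod.mk.injEq]
          refine ⟨?_, trivial⟩
          calc (q*t₀)⁻¹*(p*t₀) = t₀⁻¹*q⁻¹*(p*t₀) := by rw [mul_inv_rev]
          _ = t₀*(q⁻¹*p)*t₀ := by rw [hTinv' t₀ ht₀]; group
          _ = (q⁻¹*p)⁻¹ := hconj t₀ (q⁻¹*p) ht₀ (hTT q⁻¹ p (hTinvmem q hq) hp)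
          _ = p⁻¹*q := by rw [mul_inv_rev, inv_inv]
          _ = p*q := by rw [hTinv' p hp]
      have hCu1 : ∀ q, N q → cmul (Φ q) ((t₀:G), false) = (q*t₀, false) := by
        intro q hq; rw [hΦpos q hq, Chein.cmul_ff]
      have hCu2 : ∀ q, ¬ N q → cmul (Φ q) ((t₀:G), false) = (q, true) := by
        intro q hq; rw [hΦneg q hq, Chein.cmul_tf, mul_inv_cancel_right]
      have hE1 : ∀ p q, cmul (Φ p) (cmul (Φ q) ((t₀:G),false))
          = cmul (Φ (q*p)) ((t₀:G),false) := by
        intro p q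
        by_cases hp : N p <;> by_cases hq : N q
        · rw [hCu1 q hq, hΦpos p hp, Chein.cmul_ff, hCu1 _ (hNmul q p hq hp)]
          simp only [Prod.mk.injEq]
          refine ⟨?_, trivial⟩
          calc p*(q*t₀) = (p*q)*t₀ := (mul_assoc _ _ _).symm
          _ = (q*p)*t₀ := by rw [hcom p q hp hq]
        · rw [hCu2 q hq, hΦpos p hp, Chein.cmul_ft, hCu2 _ (hTN q p hq hp)]
        · rw [hCu1 q hq, hΦneg p hp, Chein.cmul_tf, hCu2 _ (hNT q p hq hp)]
          simp only [Prod.mk.injEq]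
          refine ⟨?_, trivial⟩
          calc (p*t₀)*(q*t₀)⁻¹ = p*t₀*(t₀⁻¹*q⁻¹) := by rw [mul_inv_rev]
          _ = p*q⁻¹ := by group
          _ = q*p := (hswapT' p q hp hq).symm
        · rw [hCu2 q hq, hΦneg p hp, Chein.cmul_tt, hCu1 _ (hTT q p hq hp)]
          simp only [Prod.mk.injEq]
          refine ⟨?_, trivial⟩
          calc q⁻¹*(p*t₀) = (q⁻¹*p)*t₀ := (mul_assoc _ _ _).symm
          _ = (q*p)*t₀ := by rw [hTinv' q hq]
      have hE2 : ∀ p q, cmul (cmul (Φ p) ((t₀:G),false)) (cmul (Φ q) ((t₀:G),false))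
          = Φ (q⁻¹*p) := by
        intro p q
        by_cases hp : N p <;> by_cases hq : N q
        · rw [hCu1 p hp, hCu1 q hq, Chein.cmul_ff, hΦpos _ (hNmul q⁻¹ p (hNinv q hq) hp)]
          simp only [Prod.mk.injEq]
          refine ⟨?_, trivial⟩
          calc (p*t₀)*(q*t₀) = p*(t₀*q)*t₀ := by group
          _ = p*(q⁻¹*t₀)*t₀ := by rw [hswapT t₀ q ht₀ hq]
          _ = (p*q⁻¹)*(t₀*t₀) := by group
          _ = p*q⁻¹ := by rw [ht2, mul_one]
          _ = q⁻¹*p := hcom p q⁻¹ hp (hNinv q hq)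
        · rw [hCu1 p hp, hCu2 q hq, Chein.cmul_ft, hΦneg _ (hTN q⁻¹ p (hTinvmem q hq) hp)]
          simp only [Prod.mk.injEq]
          refine ⟨?_, trivial⟩
          calc q*(p*t₀) = (q*p)*t₀ := (mul_assoc _ _ _).symm
          _ = (q⁻¹*p)*t₀ := by rw [hTinv' q hq]
        · rw [hCu2 p hp, hCu1 q hq, Chein.cmul_tf, hΦneg _ (hNT q⁻¹ p (hNinv q hq) hp)]
          simp only [Prod.mk.injEq]
          refine ⟨?_, trivial⟩
          calc p*(q*t₀)⁻¹ = p*(t₀⁻¹*q⁻¹) := by rw [mul_inv_rev]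
          _ = p*(t₀*q⁻¹) := by rw [hTinv' t₀ ht₀]
          _ = p*(q*t₀) := by rw [hswapT t₀ q⁻¹ ht₀ (hNinv q hq), inv_inv]
          _ = (p*q)*t₀ := (mul_assoc _ _ _).symm
          _ = (q⁻¹*p)*t₀ := by rw [hswapT p q hp hq]
        · rw [hCu2 p hp, hCu2 q hq, Chein.cmul_tt, hΦpos _ (hTT q⁻¹ p (hTinvmem q hq) hp)]
      have hE4 : ∀ p q, cmul (cmul (Φ p) ((t₀:G),false)) (Φ q)
          = cmul (Φ (p*q⁻¹)) ((t₀:G),false) := by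
        intro p q
        by_cases hp : N p <;> by_cases hq : N q
        · rw [hCu1 p hp, hΦpos q hq, Chein.cmul_ff, hCu1 _ (hNmul p q⁻¹ hp (hNinv q hq))]
          simp only [Prod.mk.injEq]
          refine ⟨?_, trivial⟩
          calc (p*t₀)*q = p*(t₀*q) := mul_assoc _ _ _
          _ = p*(q⁻¹*t₀) := by rw [hswapT t₀ q ht₀ hq]
          _ = (p*q⁻¹)*t₀ := (mul_assoc _ _ _).symm
        · rw [hCu1 p hp, hΦneg q hq, Chein.cmul_ft, hCu2 _ (hNT p q⁻¹ hp (hTinvmem q hq))]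
          simp only [Prod.mk.injEq]
          refine ⟨?_, trivial⟩
          calc (q*t₀)*(p*t₀) = q*(t₀*p)*t₀ := by group
          _ = q*(p⁻¹*t₀)*t₀ := by rw [hswapT t₀ p ht₀ hp]
          _ = (q*p⁻¹)*(t₀*t₀) := by group
          _ = q*p⁻¹ := by rw [ht2, mul_one]
          _ = p*q := by rw [hswapT q p⁻¹ hq (hNinv p hp), inv_inv]
          _ = p*q⁻¹ := by rw [hTinv' q hq]
        · rw [hCu2 p hp, hΦpos q hq, Chein.cmul_tf, hCu2 _ (hTN p q⁻¹ hp (hNinv q hq))]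
        · rw [hCu2 p hp, hΦneg q hq, Chein.cmul_tt, hCu1 _ (hTT p q⁻¹ hp (hTinvmem q hq))]
          simp only [Prod.mk.injEq]
          refine ⟨?_, trivial⟩
          calc (q*t₀)⁻¹*p = t₀⁻¹*(q⁻¹*p) := by rw [mul_inv_rev]; group
          _ = t₀*(q⁻¹*p) := by rw [hTinv' t₀ ht₀]
          _ = (q⁻¹*p)⁻¹*t₀ := hswapT t₀ (q⁻¹*p) ht₀ (hTT q⁻¹ p (hTinvmem q hq) hp)
          _ = (p⁻¹*q)*t₀ := by rw [mul_inv_rev, inv_inv]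
          _ = (p*q)*t₀ := by rw [hTinv' p hp]
          _ = (p*q⁻¹)*t₀ := by rw [hTinv' q hq]
      exact Chein.engine f hinj hsurj hh hnh hnah hnab Φ ((t₀:G),false)
        hu' hΦH hΦinj hΦmul hΦsurj hE1 hE2 hE4
    · -- case Y2 : Bs coincides with the complement of N
      have hb' : b₀⁻¹ = b₀ := hTinv' b₀ hbN
      have hs2 : b₀*b₀ = 1 := hTinv b₀ hbN
      have hBiffT : ∀ g, Bs g ↔ ¬ N g := by
        intro g
        constructor
        · intro hg hcN
          exact hTN b₀⁻¹ g (hTinvmem b₀ hbN) hcN (hBB g b₀ hg hb₀)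
        · intro hg
          have h1 : N (b₀⁻¹*g) := hTT b₀⁻¹ g (hTinvmem b₀ hbN) hg
          have h2 := hBN b₀ (b₀⁻¹*g) hb₀ h1
          rwa [mul_inv_cancel_left] at h2
      set Φ : G → G × Bool := fun p => if N p then ((p:G), false) else (b₀*p*b₀, true)
        with hΦdef
      have hΦpos : ∀ p, N p → Φ p = (p, false) := by
        intro p hp; simp only [hΦdef]; rw [if_pos hp]
      have hΦneg : ∀ p, ¬ N p → Φ p = (b₀*p*b₀, true) := by
        intro p hp; simp only [hΦdef]; rw [if_neg hp]
      have hu' : (f ((1:G), true)).2 = true :=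
        hnotB 1 (fun hc => ((hBiffT 1).mp hc) hN1)
      have hΦH : ∀ p, (f (Φ p)).2 = false := by
        intro p
        by_cases hp : N p
        · rw [hΦpos p hp]; exact hp
        · rw [hΦneg p hp]
          exact (hBiffT _).mpr (hNT (b₀*p) b₀ (hTT b₀ p hbN hp) hbN)
      have hΦinj : Function.Injective Φ := by
        intro p q hpq
        by_cases hp : N p <;> by_cases hq : N q
        · rw [hΦpos p hp, hΦpos q hq] at hpq; injection hpq
        · rw [hΦpos p hp, hΦneg q hq] at hpq
          injection hpq with _ h2; exact Bool.noConfusion h2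
        · rw [hΦneg p hp, hΦpos q hq] at hpq
          injection hpq with _ h2; exact Bool.noConfusion h2
        · rw [hΦneg p hp, hΦneg q hq] at hpq
          injection hpq with h1 _
          exact mul_left_cancel (mul_right_cancel h1)
      have hΦsurj : ∀ x : G × Bool, (f x).2 = false → ∃ p, Φ p = x := by
        intro x hx
        rcases x with ⟨g, _|_⟩
        · exact ⟨g, hΦpos g hx⟩
        · have hg : ¬ N g := (hBiffT g).mp hx
          refine ⟨b₀*g*b₀, ?_⟩
          have hmem : ¬ N (b₀*g*b₀) := hNT (b₀*g) b₀ (hTT b₀ g hbN hg) hbN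
          rw [hΦneg _ hmem]
          simp only [Prod.mk.injEq]
          refine ⟨?_, trivial⟩
          calc b₀*(b₀*g*b₀)*b₀ = (b₀*b₀)*(g*(b₀*b₀)) := by group
          _ = g := by rw [hs2, one_mul, mul_one]
      have hΦmul : ∀ p q, cmul (Φ p) (Φ q) = Φ (p*q) := by
        intro p q
        by_cases hp : N p <;> by_cases hq : N q
        · rw [hΦpos p hp, hΦpos q hq, Chein.cmul_ff, hΦpos _ (hNmul p q hp hq)]
        · rw [hΦpos p hp, hΦneg q hq, Chein.cmul_ft, hΦneg _ (hNT p q hp hq)]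
          simp only [Prod.mk.injEq]
          refine ⟨?_, trivial⟩
          calc (b₀*q*b₀)*p = b₀*q*(b₀*p) := by group
          _ = b₀*q*(p⁻¹*b₀) := by rw [hswapT b₀ p hbN hp]
          _ = b₀*(q*p⁻¹)*b₀ := by group
          _ = b₀*(p*q)*b₀ := by rw [hswapT q p⁻¹ hq (hNinv p hp), inv_inv]
        · rw [hΦneg p hp, hΦpos q hq, Chein.cmul_tf, hΦneg _ (hTN p q hp hq)]
          simp only [Prod.mk.injEq]
          refine ⟨?_, trivial⟩
          calc (b₀*p*b₀)*q⁻¹ = b₀*p*(b₀*q⁻¹) := by group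
          _ = b₀*p*(q*b₀) := by rw [hswapT b₀ q⁻¹ hbN (hNinv q hq), inv_inv]
          _ = b₀*(p*q)*b₀ := by group
        · rw [hΦneg p hp, hΦneg q hq, Chein.cmul_tt, hΦpos _ (hTT p q hp hq)]
          simp only [Prod.mk.injEq]
          refine ⟨?_, trivial⟩
          calc (b₀*q*b₀)⁻¹*(b₀*p*b₀) = b₀⁻¹*(q⁻¹*p)*b₀ := by group
          _ = b₀*(q⁻¹*p)*b₀ := by rw [hb']
          _ = (q⁻¹*p)⁻¹ := hconj b₀ (q⁻¹*p) hbN (hTT q⁻¹ p (hTinvmem q hq) hp)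
          _ = p⁻¹*q := by rw [mul_inv_rev, inv_inv]
          _ = p*q := by rw [hTinv' p hp]
      have hCu1 : ∀ q, N q → cmul (Φ q) ((1:G), true) = (q, true) := by
        intro q hq; rw [hΦpos q hq, Chein.cmul_ft, one_mul]
      have hCu2 : ∀ q, ¬ N q → cmul (Φ q) ((1:G), true) = (b₀*q*b₀, false) := by
        intro q hq; rw [hΦneg q hq, Chein.cmul_tt, inv_one, one_mul]
      have hE1 : ∀ p q, cmul (Φ p) (cmul (Φ q) ((1:G),true))
          = cmul (Φ (q*p)) ((1:G),true) := by
        intro p q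
        by_cases hp : N p <;> by_cases hq : N q
        · rw [hCu1 q hq, hΦpos p hp, Chein.cmul_ft, hCu1 _ (hNmul q p hq hp)]
        · rw [hCu2 q hq, hΦpos p hp, Chein.cmul_ff, hCu2 _ (hTN q p hq hp)]
          simp only [Prod.mk.injEq]
          refine ⟨?_, trivial⟩
          calc p*(b₀*q*b₀) = (p*b₀)*q*b₀ := by group
          _ = (b₀*p⁻¹)*q*b₀ := by rw [hswapT' b₀ p hbN hp]
          _ = b₀*(p⁻¹*q)*b₀ := by group
          _ = b₀*(q*p)*b₀ := by rw [hswapT' q p⁻¹ hq (hNinv p hp), inv_inv]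
        · rw [hCu1 q hq, hΦneg p hp, Chein.cmul_tt, hCu2 _ (hNT q p hq hp)]
          simp only [Prod.mk.injEq]
          refine ⟨?_, trivial⟩
          calc q⁻¹*(b₀*p*b₀) = (q⁻¹*b₀)*p*b₀ := by group
          _ = (b₀*q)*p*b₀ := by rw [← hswapT b₀ q hbN hq]
          _ = b₀*(q*p)*b₀ := by group
        · rw [hCu2 q hq, hΦneg p hp, Chein.cmul_tf, hCu1 _ (hTT q p hq hp)]
          simp only [Prod.mk.injEq]
          refine ⟨?_, trivial⟩
          calc (b₀*p*b₀)*(b₀*q*b₀)⁻¹ = b₀*(p*q⁻¹)*b₀⁻¹ := by group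
          _ = b₀*(p*q⁻¹)*b₀ := by rw [hb']
          _ = (p*q⁻¹)⁻¹ := hconj b₀ _ hbN (hTT p q⁻¹ hp (hTinvmem q hq))
          _ = q*p⁻¹ := by rw [mul_inv_rev, inv_inv]
          _ = q*p := by rw [hTinv' p hp]
      have hE2 : ∀ p q, cmul (cmul (Φ p) ((1:G),true)) (cmul (Φ q) ((1:G),true))
          = Φ (q⁻¹*p) := by
        intro p q
        by_cases hp : N p <;> by_cases hq : N q
        · rw [hCu1 p hp, hCu1 q hq, Chein.cmul_tt, hΦpos _ (hNmul q⁻¹ p (hNinv q hq) hp)]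
        · rw [hCu1 p hp, hCu2 q hq, Chein.cmul_tf, hΦneg _ (hTN q⁻¹ p (hTinvmem q hq) hp)]
          simp only [Prod.mk.injEq]
          refine ⟨?_, trivial⟩
          calc p*(b₀*q*b₀)⁻¹ = (p*b₀⁻¹)*q⁻¹*b₀⁻¹ := by group
          _ = (p*b₀)*q⁻¹*b₀ := by rw [hb']
          _ = (b₀*p⁻¹)*q⁻¹*b₀ := by rw [hswapT' b₀ p hbN hp]
          _ = b₀*(p⁻¹*q⁻¹)*b₀ := by group
          _ = b₀*(q⁻¹*p)*b₀ := by rw [hswapT' q⁻¹ p⁻¹ (hTinvmem q hq) (hNinv p hp), inv_inv]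
        · rw [hCu2 p hp, hCu1 q hq, Chein.cmul_ft, hΦneg _ (hNT q⁻¹ p (hNinv q hq) hp)]
          simp only [Prod.mk.injEq]
          refine ⟨?_, trivial⟩
          calc q*(b₀*p*b₀) = (q*b₀)*p*b₀ := by group
          _ = (b₀*q⁻¹)*p*b₀ := by rw [hswapT' b₀ q hbN hq]
          _ = b₀*(q⁻¹*p)*b₀ := by group
        · rw [hCu2 p hp, hCu2 q hq, Chein.cmul_ff, hΦpos _ (hTT q⁻¹ p (hTinvmem q hq) hp)]
          simp only [Prod.mk.injEq]
          refine ⟨?_, trivial⟩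
          calc (b₀*p*b₀)*(b₀*q*b₀) = b₀*(p*(b₀*b₀)*q)*b₀ := by group
          _ = b₀*(p*q)*b₀ := by rw [hs2, mul_one]
          _ = (p*q)⁻¹ := hconj b₀ _ hbN (hTT p q hp hq)
          _ = q⁻¹*p⁻¹ := mul_inv_rev p q
          _ = q⁻¹*p := by rw [hTinv' p hp]
      have hE4 : ∀ p q, cmul (cmul (Φ p) ((1:G),true)) (Φ q)
          = cmul (Φ (p*q⁻¹)) ((1:G),true) := by
        intro p q
        by_cases hp : N p <;> by_cases hq : N q
        · rw [hCu1 p hp, hΦpos q hq, Chein.cmul_tf, hCu1 _ (hNmul p q⁻¹ hp (hNinv q hq))]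
        · rw [hCu1 p hp, hΦneg q hq, Chein.cmul_tt, hCu2 _ (hNT p q⁻¹ hp (hTinvmem q hq))]
          simp only [Prod.mk.injEq]
          refine ⟨?_, trivial⟩
          calc (b₀*q*b₀)⁻¹*p = b₀⁻¹*q⁻¹*(b₀⁻¹*p) := by group
          _ = b₀*q⁻¹*(b₀*p) := by rw [hb']
          _ = b₀*q⁻¹*(p⁻¹*b₀) := by rw [hswapT b₀ p hbN hp]
          _ = b₀*(q⁻¹*p⁻¹)*b₀ := by group
          _ = b₀*(p*q⁻¹)*b₀ := by rw [hswapT q⁻¹ p⁻¹ (hTinvmem q hq) (hNinv p hp), inv_inv]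
        · rw [hCu2 p hp, hΦpos q hq, Chein.cmul_ff, hCu2 _ (hTN p q⁻¹ hp (hNinv q hq))]
          simp only [Prod.mk.injEq]
          refine ⟨?_, trivial⟩
          calc (b₀*p*b₀)*q = b₀*p*(b₀*q) := by group
          _ = b₀*p*(q⁻¹*b₀) := by rw [hswapT b₀ q hbN hq]
          _ = b₀*(p*q⁻¹)*b₀ := by group
        · rw [hCu2 p hp, hΦneg q hq, Chein.cmul_ft, hCu1 _ (hTT p q⁻¹ hp (hTinvmem q hq))]
          simp only [Prod.mk.injEq]
          refine ⟨?_, trivial⟩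
          calc (b₀*q*b₀)*(b₀*p*b₀) = b₀*(q*(b₀*b₀)*p)*b₀ := by group
          _ = b₀*(q*p)*b₀ := by rw [hs2, mul_one]
          _ = (q*p)⁻¹ := hconj b₀ _ hbN (hTT q p hq hp)
          _ = p⁻¹*q⁻¹ := mul_inv_rev q p
          _ = p*q⁻¹ := by rw [hTinv' p hp]
      exact Chein.engine f hinj hsurj hh hnh hnah hnab Φ ((1:G),true)
        hu' hΦH hΦinj hΦmul hΦsurj hE1 hE2 hE4
  · -- B empty
    have hBe : ∀ g, ¬ Bs g := fun g hg => hB ⟨g, hg⟩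
    have hψ : ∀ g : G, f (g, true) = ((f (g,true)).1, true) :=
      fun g => Prod.ext rfl (hnotB g (hBe g))
    have hNall : ∀ g, N g := by
      have hψinj : Function.Injective (fun g : G => (f (g,true)).1) := by
        intro a b hab
        have h1 : f ((a:G), true) = f ((b:G), true) := by
          rw [hψ a, hψ b]
          exact congrArg (fun z => (z, true)) hab
        have h2 := hinj h1
        injection h2
      have hψsurj := Finite.injective_iff_surjective.mp hψinj
      intro g
      by_contra hg
      obtain ⟨z, hz⟩ := hψsurj (f ((g:G), false)).1
      simp only at hz
      have h1 : f ((z:G), true) = f ((g:G), false) := by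
        rw [hψ z]
        have h3 : f ((g:G), false) = ((f ((g:G),false)).1, true) :=
          Prod.ext rfl (hnotN g hg)
        rw [h3, hz]
      have h2 := hinj h1
      injection h2 with _ h3
      exact Bool.noConfusion h3
    have hΦH : ∀ p : G, (f ((p, false) : G × Bool)).2 = false := fun p => hNall p
    have hu' : (f ((1:G), true)).2 = true := hnotB 1 (hBe 1)
    have hΦinj : Function.Injective (fun p : G => ((p, false) : G × Bool)) := by
      intro a b hab
      injection hab
    have hΦmul : ∀ p q : G,
        cmul ((p, false) : G × Bool) ((q, false) : G × Bool) = ((p*q : G), false) := by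
      intro p q
      rw [Chein.cmul_ff]
    have hΦsurj : ∀ x : G × Bool, (f x).2 = false → ∃ p : G, ((p, false) : G × Bool) = x := by
      intro x hx
      rcases x with ⟨g, _|_⟩
      · exact ⟨g, rfl⟩
      · exact absurd hx (hBe g)
    have hE1 : ∀ p q : G, cmul ((p,false) : G × Bool) (cmul ((q,false) : G × Bool) ((1:G),true))
        = cmul (((q*p : G),false) : G × Bool) ((1:G),true) := by
      intro p q
      rw [Chein.cmul_ft, Chein.cmul_ft, Chein.cmul_ft, one_mul, one_mul]
    have hE2 : ∀ p q : G,
        cmul (cmul ((p,false) : G × Bool) ((1:G),true)) (cmul ((q,false) : G × Bool) ((1:G),true))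
        = (((q⁻¹*p : G), false) : G × Bool) := by
      intro p q
      rw [Chein.cmul_ft, Chein.cmul_ft, Chein.cmul_tt, one_mul, one_mul]
    have hE4 : ∀ p q : G,
        cmul (cmul ((p,false) : G × Bool) ((1:G),true)) ((q,false) : G × Bool)
        = cmul (((p*q⁻¹ : G), false) : G × Bool) ((1:G),true) := by
      intro p q
      rw [Chein.cmul_ft, Chein.cmul_tf, Chein.cmul_ft, one_mul, one_mul]
    exact Chein.engine f hinj hsurj hh hnh hnah hnab (fun p : G => ((p, false) : G × Bool))
      ((1:G),true) hu' hΦH hΦinj hΦmul hΦsurj hE1 hE2 hE4
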